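/- For all positive integers c and t, every graph G with treewidth at most t admits a c-colouring in which every monochromatic component has at most (t+1)^{(c-1)/c} · |V(G)|^{1/c} vertices. -/

import Mathlib

open SimpleGraph

universe u v

/-- The strong product of two simple graphs. -/
def StrongProd {α : Type u} {β : Type v} (G : SimpleGraph α) (H : SimpleGraph β) :
    SimpleGraph (α × β) where
  Adj x y := (x.1 = y.1 ∧ H.Adj x.2 y.2) ∨ (x.2 = y.2 ∧ G.Adj x.1 y.1) ∨
    (G.Adj x.1 y.1 ∧ H.Adj x.2 y.2)
  symm := by
    constructor
    rintro x y (⟨h1, h2⟩ | ⟨h1, h2⟩ | ⟨h1, h2⟩)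
    · exact Or.inl ⟨h1.symm, h2.symm⟩
    · exact Or.inr (Or.inl ⟨h1.symm, h2.symm⟩)
    · exact Or.inr (Or.inr ⟨h1.symm, h2.symm⟩)
  loopless := by
    constructor
    rintro x (⟨h1, h2⟩ | ⟨h1, h2⟩ | ⟨h1, h2⟩)
    · exact h2.ne rfl
    · exact h2.ne rfl
    · exact h1.ne rfl

/-- The fan graph `F_n`: a path on `n` vertices (vertices `1,…,n`) together with
one dominant vertex (vertex `0`) adjacent to all path vertices. -/
def Fan (n : ℕ) : SimpleGraph (Fin (n + 1)) :=
  SimpleGraph.fromRel (fun u v => u = 0 ∨ u.val + 1 = v.val)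

/-- The cone over `m` disjoint copies of `G`: `m` pairwise disjoint copies of `G`
together with one new vertex adjacent to every vertex of every copy. -/
def GraphCone {V : Type u} (m : ℕ) (G : SimpleGraph V) :
    SimpleGraph (Option (Fin m × V)) where
  Adj x y :=
    match x, y with
    | none, none => False
    | none, some _ => True
    | some _, none => True
    | some (i, _u), some (j, _v) => i = j ∧ G.Adj _u _v
  symm := by
    constructor
    rintro (_ | ⟨i, u⟩) (_ | ⟨j, v⟩) h
    · exact h
    · trivial
    · trivial
    · exact ⟨h.1.symm, h.2.symm⟩
  loopless := by
    constructor
    rintro (_ | ⟨i, u⟩) h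
    · exact h
    · exact h.2.ne rfl

/-- `G` has a tree-decomposition of width at most `t`. -/
def TreewidthLE {V : Type u} (G : SimpleGraph V) (t : ℕ) : Prop :=
  ∃ (ι : Type) (T : SimpleGraph ι) (W : ι → Finset V),
    T.IsTree ∧
    (∀ ⦃u v : V⦄, G.Adj u v → ∃ x, u ∈ W x ∧ v ∈ W x) ∧
    (∀ v : V, (T.induce {x | v ∈ W x}).Connected) ∧
    (∀ x, (W x).card ≤ t + 1)

/-- A set of vertices is monochromatic under a colouring `f`. -/
def IsMonochromatic {V : Type u} {c : ℕ} (f : V → Fin c) (S : Finset V) : Prop :=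
  ∀ u ∈ S, ∀ v ∈ S, f u = f v

/-- Every monochromatic component of the colouring `f` of `G` has at most `k` vertices. -/
def ClusterLE {V : Type u} {c : ℕ} (G : SimpleGraph V) (f : V → Fin c) (k : ℕ) : Prop :=
  ∀ S : Finset V, IsMonochromatic f S → (G.induce (S : Set V)).Connected → S.card ≤ k

/-- Every monochromatic component of the colouring `f` of `G` has at most `b` vertices
(real-valued bound). -/
def ClusterLEReal {V : Type u} {c : ℕ} (G : SimpleGraph V) (f : V → Fin c) (b : ℝ) : Prop :=
  ∀ S : Finset V, IsMonochromatic f S → (G.induce (S : Set V)).Connected → (S.card : ℝ) ≤ b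

def Linked {V : Type*} (G : SimpleGraph V) (s : Set V) : Prop :=
  s.Nonempty ∧ ∀ u ∈ s, ∀ v ∈ s, ∃ p : G.Walk u v, ∀ z ∈ p.support, z ∈ s

lemma lift_walk {V : Type*} {G : SimpleGraph V} {s : Set V} (w : Set s) :
    ∀ {u v : V} (p : G.Walk u v), (∀ z ∈ p.support, z ∈ Subtype.val '' w) →
      ∃ (hu : u ∈ s) (hv : v ∈ s) (q : (G.induce s).Walk ⟨u, hu⟩ ⟨v, hv⟩),
        ∀ z ∈ q.support, z ∈ w
  | u, _, SimpleGraph.Walk.nil, h => by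
    obtain ⟨a, haw, ha⟩ := h u (by simp)
    have hu : u ∈ s := ha ▸ a.2
    refine ⟨hu, hu, SimpleGraph.Walk.nil, ?_⟩
    intro z hz
    rw [SimpleGraph.Walk.support_nil, List.mem_singleton] at hz
    subst hz
    convert haw using 1
    exact Subtype.ext ha.symm
  | u, v, SimpleGraph.Walk.cons hadj p, h => by
    obtain ⟨hb, hv, q, hq⟩ := lift_walk w p (fun z hz => h z (by simp [hz]))
    obtain ⟨a, haw, ha⟩ := h u (by simp)
    have hu : u ∈ s := ha ▸ a.2
    refine ⟨hu, hv, SimpleGraph.Walk.cons (by simpa using hadj) q, ?_⟩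
    intro z hz
    rw [SimpleGraph.Walk.support_cons, List.mem_cons] at hz
    rcases hz with rfl | hz
    · convert haw using 1; exact Subtype.ext ha.symm
    · exact hq z hz

lemma proj_walk {V : Type*} {G : SimpleGraph V} {s : Set V} (w : Set s) :
    ∀ {u v : s} (p : (G.induce s).Walk u v), (∀ z ∈ p.support, z ∈ w) →
      ∃ q : G.Walk u.val v.val, ∀ z ∈ q.support, z ∈ Subtype.val '' w
  | u, _, SimpleGraph.Walk.nil, h => by
    refine ⟨SimpleGraph.Walk.nil, ?_⟩
    intro z hz
    rw [SimpleGraph.Walk.support_nil, List.mem_singleton] at hz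
    subst hz
    exact ⟨u, h u (by simp), rfl⟩
  | u, v, SimpleGraph.Walk.cons hadj p, h => by
    obtain ⟨q, hq⟩ := proj_walk w p (fun z hz => h z (by simp [hz]))
    refine ⟨SimpleGraph.Walk.cons (by simpa using hadj) q, ?_⟩
    intro z hz
    rw [SimpleGraph.Walk.support_cons, List.mem_cons] at hz
    rcases hz with rfl | hz
    · exact ⟨u, h u (by simp), rfl⟩
    · exact hq z hz

lemma connected_iff_linked {V : Type*} (G : SimpleGraph V) (s : Set V) :
    (G.induce s).Connected ↔ Linked G s := by
  constructor
  · intro hc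
    obtain ⟨⟨x, hx⟩⟩ := hc.nonempty
    refine ⟨⟨x, hx⟩, fun u hu v hv => ?_⟩
    obtain ⟨p⟩ := hc.preconnected ⟨u, hu⟩ ⟨v, hv⟩
    obtain ⟨q, hq⟩ := proj_walk (Set.univ : Set s) p (by simp)
    exact ⟨q, fun z hz => by obtain ⟨⟨z', hz'⟩, -, rfl⟩ := hq z hz; exact hz'⟩
  · rintro ⟨⟨x, hx⟩, h⟩
    have hne : Nonempty s := ⟨⟨x, hx⟩⟩
    refine SimpleGraph.Connected.mk fun u v => ?_
    obtain ⟨p, hp⟩ := h u.val u.2 v.val v.2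
    obtain ⟨hu', hv', q, -⟩ := lift_walk (Set.univ : Set s) p
      (fun z hz => ⟨⟨z, hp z hz⟩, Set.mem_univ _, rfl⟩)
    exact ⟨q⟩

lemma linked_induce_iff {V : Type*} (G : SimpleGraph V) (s : Set V) (w : Set s) :
    Linked (G.induce s) w ↔ Linked G (Subtype.val '' w) := by
  constructor
  · rintro ⟨⟨x, hx⟩, h⟩
    refine ⟨⟨x, x, hx, rfl⟩, ?_⟩
    rintro u ⟨u', hu', rfl⟩ v ⟨v', hv', rfl⟩
    obtain ⟨p, hp⟩ := h u' hu' v' hv'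
    exact proj_walk w p hp
  · rintro ⟨⟨x, ⟨x', hx', rfl⟩⟩, h⟩
    refine ⟨⟨x', hx'⟩, ?_⟩
    intro u hu v hv
    obtain ⟨p, hp⟩ := h u.val ⟨u, hu, rfl⟩ v.val ⟨v, hv, rfl⟩
    obtain ⟨hu', hv', q, hq⟩ := lift_walk w p hp
    exact ⟨q, hq⟩

lemma tw_induce {V : Type} {G : SimpleGraph V} {t : ℕ} (h : TreewidthLE G t) (s : Set V) :
    TreewidthLE (G.induce s) t := by
  classical
  obtain ⟨ι, T, W, hT, hedge, hconn, hcard⟩ := h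
  refine ⟨ι, T, fun x => (W x).subtype (· ∈ s), hT, ?_, ?_, ?_⟩
  · rintro ⟨u, hu⟩ ⟨v, hv⟩ hadj
    obtain ⟨x, hux, hvx⟩ := hedge (by simpa using hadj)
    exact ⟨x, by simp [hux, hvx]⟩
  · intro v
    have : {x | v ∈ (W x).subtype (· ∈ s)} = {x | v.val ∈ W x} := by
      ext x; simp
    rw [this]
    exact hconn v.val
  · intro x
    refine le_trans ?_ (hcard x)
    rw [Finset.card_subtype]
    exact Finset.card_filter_le _ _

section TreeMachinery

set_option linter.unusedSectionVars false
variable {ι : Type} [DecidableEq ι] {T : SimpleGraph ι} (hT : T.IsTree) (r : ι)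
include hT

/-- The unique path from `z` to the root `r`. -/
noncomputable def pth (z : ι) : T.Walk z r :=
  (hT.isConnected.preconnected z r).some.bypass

lemma pth_isPath (z : ι) : (pth hT r z).IsPath := SimpleGraph.Walk.bypass_isPath _

omit [DecidableEq ι] in
/-- The "descendants" of `x` (w.r.t. root `r`): nodes all of whose walks to `r` pass
through `x`. -/
def Dset {ι : Type} (T : SimpleGraph ι) (r x : ι) : Set ι := {z | ∀ w : T.Walk z r, x ∈ w.support}

lemma mem_Dset_iff {x z : ι} : z ∈ Dset T r x ↔ x ∈ (pth hT r z).support := by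
  constructor
  · intro h; exact h _
  · intro h w
    have hup : w.bypass = pth hT r z := by
      have := hT.IsAcyclic.path_unique ⟨w.bypass, SimpleGraph.Walk.bypass_isPath w⟩
        ⟨pth hT r z, pth_isPath hT r z⟩
      exact congrArg Subtype.val this
    exact SimpleGraph.Walk.support_bypass_subset w (hup ▸ h)

lemma self_mem_Dset (x : ι) : x ∈ Dset T r x := fun w => w.start_mem_support

lemma mem_Dset_root (z : ι) : z ∈ Dset T r r := fun w => w.end_mem_support

lemma Dset_of_avoid_walk {x z b : ι} (hz : z ∈ Dset T r x) (q : T.Walk z b)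
    (hq : x ∉ q.support) : b ∈ Dset T r x := by
  by_contra hb
  simp only [Dset, Set.mem_setOf_eq, not_forall] at hb
  obtain ⟨w', hw'⟩ := hb
  have := hz (q.append w')
  rw [SimpleGraph.Walk.mem_support_append_iff] at this
  exact this.elim hq hw'

lemma nbr_extract {x b : ι} (hb : b ∈ Dset T r x) (hne : b ≠ x) :
    ∃ y, T.Adj x y ∧ y ∈ Dset T r x ∧ b ∈ Dset T r y ∧
      ∃ q : T.Walk b y, x ∉ q.support := by
  have hx : x ∈ (pth hT r b).support := (mem_Dset_iff hT r).mp hb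
  set q1 : T.Walk b x := (pth hT r b).takeUntil x hx with hq1
  have hq1path : q1.IsPath := (pth_isPath hT r b).takeUntil hx
  have hq1rpath : q1.reverse.IsPath := hq1path.reverse
  cases hrev : q1.reverse with
  | nil => exact absurd rfl hne
  | @cons _ y _ h q2 =>
    rw [hrev] at hq1rpath
    rw [SimpleGraph.Walk.cons_isPath_iff] at hq1rpath
    have hxq2 : x ∉ q2.support := hq1rpath.2
    have hyq1 : y ∈ q1.support := by
      have : y ∈ q1.reverse.support := by rw [hrev]; simp
      rwa [SimpleGraph.Walk.support_reverse, List.mem_reverse] at this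
    refine ⟨y, h, ?_, ?_, q2.reverse, by simpa using hxq2⟩
    · intro w0
      by_contra hw0
      have hbd : b ∈ Dset T r x := hb
      have : x ∈ (q2.reverse.append w0).support := hbd _
      rw [SimpleGraph.Walk.mem_support_append_iff] at this
      rcases this with h1 | h1
      · rw [SimpleGraph.Walk.support_reverse] at h1
        exact hxq2 (List.mem_reverse.mp h1)
      · exact hw0 h1
    · rw [mem_Dset_iff hT r]
      exact SimpleGraph.Walk.support_takeUntil_subset _ hx hyq1

lemma nbr_unique {x y y' : ι} (hy : T.Adj x y) (hy' : T.Adj x y') (q : T.Walk y y')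
    (hq : x ∉ q.support) : y = y' := by
  have hP1 : (SimpleGraph.Walk.cons hy' SimpleGraph.Walk.nil).IsPath := by
    rw [SimpleGraph.Walk.cons_isPath_iff]
    exact ⟨SimpleGraph.Walk.IsPath.nil, by simp [hy'.ne]⟩
  have hxb : x ∉ q.bypass.support := fun hc => hq (q.support_bypass_subset hc)
  have hP2 : (SimpleGraph.Walk.cons hy q.bypass).IsPath := by
    rw [SimpleGraph.Walk.cons_isPath_iff]
    exact ⟨q.bypass_isPath, hxb⟩
  have := hT.IsAcyclic.path_unique ⟨_, hP1⟩ ⟨_, hP2⟩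
  have hsup := congrArg (fun p : T.Path x y' => (p.val).support) this
  simp only [SimpleGraph.Walk.support_cons, SimpleGraph.Walk.support_nil] at hsup
  rw [q.bypass.support_eq_cons] at hsup
  injection hsup with h5 h6
  injection h6 with h7 h8
  exact h7.symm

lemma Dset_subset {x y : ι} (hyx : y ∈ Dset T r x) : Dset T r y ⊆ Dset T r x := by
  intro z hz w
  have hy : y ∈ w.support := hz w
  exact SimpleGraph.Walk.support_dropUntil_subset w hy (hyx (w.dropUntil y hy))

lemma x_not_mem_Dset {x y : ι} (hadj : T.Adj x y) (hyx : y ∈ Dset T r x) :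
    x ∉ Dset T r y := by
  intro hxy
  have hyp : y ∈ (pth hT r x).support := (mem_Dset_iff hT r).mp hxy
  set p := pth hT r x with hp
  have hnodup : p.support.Nodup := (pth_isPath hT r x).support_nodup
  have hsplit : (p.takeUntil y hyp).append (p.dropUntil y hyp) = p := p.take_spec hyp
  have hxd : x ∈ (p.dropUntil y hyp).support := hyx _
  have hxt : x ∈ (p.takeUntil y hyp).support := SimpleGraph.Walk.start_mem_support _
  have hxtail : x ∈ (p.dropUntil y hyp).support.tail := by
    have := (p.dropUntil y hyp).support_eq_cons
    rw [this] at hxd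
    rcases List.mem_cons.mp hxd with rfl | h
    · exact absurd rfl hadj.ne
    · exact h
  have : (((p.takeUntil y hyp).support) ++ ((p.dropUntil y hyp).support.tail)).Nodup := by
    rw [← SimpleGraph.Walk.support_append, hsplit]
    exact hnodup
  exact (List.disjoint_of_nodup_append this) hxt hxtail

end TreeMachinery

lemma chunk {V : Type} [Fintype V] (G : SimpleGraph V) {t : ℕ}
    (hG : TreewidthLE G t) (m : ℝ) (hm : 0 ≤ m) (hn : m < (Fintype.card V : ℝ)) :
    ∃ (A X : Finset V), X.card ≤ t + 1 ∧ m < (A.card : ℝ) ∧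
      (∀ a b, a ∈ A → b ∉ A → b ∉ X → ¬ G.Adj a b) ∧
      (∀ C : Finset V, (∀ v ∈ C, v ∈ A ∧ v ∉ X) → (G.induce (C : Set V)).Connected →
        (C.card : ℝ) ≤ m) := by
  classical
  obtain ⟨ι, T, W, hT, hedge, hconn, hcard⟩ := hG
  have hne : Nonempty ι := hT.isConnected.nonempty
  obtain ⟨r⟩ := hne
  have hbagex : ∀ v : V, ∃ x, v ∈ W x := by
    intro v
    obtain ⟨⟨x, hx⟩⟩ := (hconn v).nonempty
    exact ⟨x, hx⟩
  choose β hβ using hbagex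
  have hlink : ∀ v : V, Linked T {x | v ∈ W x} :=
    fun v => (connected_iff_linked T _).mp (hconn v)
  set A : ι → Finset V :=
    fun x => Finset.univ.filter (fun v => ∀ y, v ∈ W y → y ∈ Dset T r x) with hA
  have hmemA : ∀ x v, v ∈ A x ↔ ∀ y, v ∈ W y → y ∈ Dset T r x := by
    intro x v; simp [hA]
  set K : Set ι := {x | m < ((A x).card : ℝ)} with hK
  have hrK : r ∈ K := by
    have hAr : A r = Finset.univ := by
      ext v
      simp only [hA, Finset.mem_filter, Finset.mem_univ, true_and, Finset.mem_univ, iff_true]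
      exact fun y _ => mem_Dset_root hT r y
    simp only [hK, Set.mem_setOf_eq, hAr, Finset.card_univ]
    exact hn
  have hKfin : K.Finite := by
    apply Set.Finite.subset
      (Set.finite_iUnion (fun v : V => ((pth hT r (β v)).support.toFinset : Finset ι).finite_toSet))
    intro x hx
    have hpos : 0 < (A x).card := by
      by_contra h
      push_neg at h
      interval_cases h' : (A x).card
      · simp only [hK, Set.mem_setOf_eq, h'] at hx
        push_cast at hx
        linarith
    obtain ⟨v, hv⟩ := Finset.card_pos.mp hpos
    have h1 : β v ∈ Dset T r x := (hmemA x v).mp hv (β v) (hβ v)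
    have h2 : x ∈ (pth hT r (β v)).support := (mem_Dset_iff hT r).mp h1
    exact Set.mem_iUnion.mpr ⟨v, by simpa using h2⟩
  obtain ⟨x, hxK, hxmin⟩ : ∃ x ∈ K, ∀ y ∈ K, Dset T r y ≤ Dset T r x →
      Dset T r x = Dset T r y := by
    obtain ⟨x, hx1, hx2⟩ := hKfin.exists_minimalFor (fun x => Dset T r x) K ⟨r, hrK⟩
    exact ⟨x, hx1, fun y hy hle => le_antisymm (hx2 hy hle) hle⟩
  refine ⟨A x, W x, hcard x, hxK, ?_, ?_⟩
  · -- separation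
    intro a b ha hbA hbX hadj
    obtain ⟨z, haz, hbz⟩ := hedge hadj
    have hz : z ∈ Dset T r x := (hmemA x a).mp ha z haz
    have hbA' : ¬ ∀ y, b ∈ W y → y ∈ Dset T r x := fun h => hbA ((hmemA x b).mpr h)
    push_neg at hbA'
    obtain ⟨y₀, hby₀, hy₀⟩ := hbA'
    obtain ⟨q, hq⟩ := (hlink b).2 z hbz y₀ hby₀
    by_cases hxq : x ∈ q.support
    · exact hbX (hq x hxq)
    · exact hy₀ (Dset_of_avoid_walk hT r hz q hxq)
  · -- components
    intro C hC hCconn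
    have hlinkC : Linked G (C : Set V) := (connected_iff_linked G _).mp hCconn
    obtain ⟨⟨v₀, hv₀⟩, hwalks⟩ := hlinkC
    have hv₀C : v₀ ∈ C := hv₀
    have hv₀A : v₀ ∈ A x := (hC v₀ hv₀C).1
    have hv₀X : v₀ ∉ W x := (hC v₀ hv₀C).2
    have hb₀D : β v₀ ∈ Dset T r x := (hmemA x v₀).mp hv₀A (β v₀) (hβ v₀)
    have hb₀ne : β v₀ ≠ x := fun h => hv₀X (h ▸ hβ v₀)
    obtain ⟨y, hadjxy, hyD, hb₀Dy, qb, hqb⟩ := nbr_extract hT r hb₀D hb₀ne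
    have hbagRel : ∀ v, v ∈ C →
        (∃ b, v ∈ W b ∧ ∃ q : T.Walk b y, x ∉ q.support) →
        ∀ b', v ∈ W b' → ∃ q : T.Walk b' y, x ∉ q.support := by
      rintro v hvC ⟨b, hvb, qby, hqby⟩ b' hvb'
      obtain ⟨q0, hq0⟩ := (hlink v).2 b' hvb' b hvb
      have hxq0 : x ∉ q0.support := fun hx' => (hC v hvC).2 (hq0 x hx')
      refine ⟨q0.append qby, ?_⟩
      rw [SimpleGraph.Walk.mem_support_append_iff]
      tauto
    have hstep : ∀ (u w : V) (q : G.Walk u w), (∀ z ∈ q.support, z ∈ C) →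
        (∀ b, u ∈ W b → ∃ qq : T.Walk b y, x ∉ qq.support) →
        (∀ b, w ∈ W b → ∃ qq : T.Walk b y, x ∉ qq.support) := by
      intro u w q
      induction q with
      | nil => exact fun _ h => h
      | cons hadj q ih =>
        rename_i a a' a''
        intro hsup hu
        obtain ⟨z, haz, ha'z⟩ := hedge hadj
        have ha'C : a' ∈ C := hsup a' (by simp)
        have ha' : ∀ b, a' ∈ W b → ∃ qq : T.Walk b y, x ∉ qq.support :=
          hbagRel a' ha'C ⟨z, ha'z, hu z haz⟩
        exact ih (fun z hz => hsup z (by simp [hz])) ha'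
    have hClaim1 : ∀ v ∈ C, ∀ b, v ∈ W b → ∃ qq : T.Walk b y, x ∉ qq.support := by
      intro v hv b hvb
      obtain ⟨q, hq⟩ := hwalks v₀ hv₀ v hv
      exact hstep v₀ v q hq (hbagRel v₀ hv₀C ⟨β v₀, hβ v₀, qb, hqb⟩) b hvb
    have hCAy : C ⊆ A y := by
      intro v hv
      rw [hmemA]
      intro b hvb
      obtain ⟨qq, hqq⟩ := hClaim1 v hv b hvb
      have hbD : b ∈ Dset T r x := (hmemA x v).mp (hC v hv).1 b hvb
      have hbne : b ≠ x := fun h => by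
        subst h; exact hqq qq.start_mem_support
      obtain ⟨y', hadjxy', hy'D, hbDy', qb', hqb'⟩ := nbr_extract hT r hbD hbne
      have hyy : y' = y := by
        refine nbr_unique hT hadjxy' hadjxy (qb'.reverse.append qq) ?_
        rw [SimpleGraph.Walk.mem_support_append_iff]
        rintro (h1 | h1)
        · rw [SimpleGraph.Walk.support_reverse, List.mem_reverse] at h1
          exact hqb' h1
        · exact hqq h1
      exact hyy ▸ hbDy'
    have hAy : ¬ m < ((A y).card : ℝ) := by
      intro hK'
      have hsub : Dset T r y ⊆ Dset T r x := Dset_subset hT r hyD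
      have heq := hxmin y hK' hsub
      exact (x_not_mem_Dset hT r hadjxy hyD) (heq ▸ self_mem_Dset hT r x)
    push_neg at hAy
    calc (C.card : ℝ) ≤ ((A y).card : ℝ) := by exact_mod_cast Finset.card_le_card hCAy
      _ ≤ m := hAy

lemma walk_cross {V : Type} {G : SimpleGraph V} {A : Finset V} {C : Finset V} :
    ∀ {u w : V} (q : G.Walk u w), (∀ z ∈ q.support, z ∈ C) → u ∈ A → w ∉ A →
      ∃ a b, G.Adj a b ∧ a ∈ A ∧ b ∉ A ∧ a ∈ C ∧ b ∈ C
  | u, _, SimpleGraph.Walk.nil, _, hu, hw => absurd hu hw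
  | u, w, SimpleGraph.Walk.cons (v := u') hadj q, hsup, hu, hw => by
    by_cases hu' : u' ∈ A
    · exact walk_cross q (fun z hz => hsup z (by simp [hz])) hu' hw
    · exact ⟨u, u', hadj, hu, hu', hsup u (by simp), hsup u' (by simp)⟩

lemma sep {t : ℕ} : ∀ n : ℕ, ∀ (V : Type) [Fintype V], ∀ (G : SimpleGraph V),
    Fintype.card V ≤ n → TreewidthLE G t → ∀ p : ℝ, 0 < p →
    ∃ S : Finset V, (S.card : ℝ) ≤ p ∧
      ∀ C : Finset V, (∀ v ∈ C, v ∉ S) → (G.induce (C : Set V)).Connected →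
        (C.card : ℝ) ≤ (t + 1) * (Fintype.card V) / p := by
  intro n
  induction n using Nat.strong_induction_on with
  | _ n ih =>
  intro V _ G hn hG p hp
  classical
  have hCV : ∀ C : Finset V, (C.card : ℝ) ≤ (Fintype.card V : ℝ) := by
    intro C
    exact_mod_cast le_trans (Finset.card_le_univ C) (le_of_eq (Finset.card_univ))
  by_cases hpt : p ≤ t + 1
  · refine ⟨∅, by simpa using hp.le, fun C _ _ => ?_⟩
    have h2 : (Fintype.card V : ℝ) * 1 ≤ (Fintype.card V : ℝ) * ((t + 1) / p) := by
      refine mul_le_mul_of_nonneg_left ?_ (by positivity)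
      rw [le_div_iff₀ hp]
      linarith
    calc (C.card : ℝ) ≤ (Fintype.card V : ℝ) := hCV C
      _ = (Fintype.card V : ℝ) * 1 := by ring
      _ ≤ (Fintype.card V : ℝ) * ((t + 1) / p) := h2
      _ = (t + 1) * (Fintype.card V) / p := by ring
  · push_neg at hpt
    set m : ℝ := (t + 1) * (Fintype.card V) / p with hmdef
    have hm0 : 0 ≤ m := by positivity
    by_cases hcV : (Fintype.card V : ℝ) ≤ m
    · exact ⟨∅, by simpa using hp.le, fun C _ _ => le_trans (hCV C) hcV⟩
    · push_neg at hcV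
      obtain ⟨A, X, hXcard, hAcard, hsep, hcomp⟩ := chunk G hG m hm0 hcV
      set s : Set V := (↑A : Set V)ᶜ with hs
      have hApos : 0 < A.card := by
        by_contra h
        push_neg at h
        have h0 : A.card = 0 := Nat.le_zero.mp h
        rw [h0] at hAcard
        push_cast at hAcard
        linarith
      have hAle : A.card ≤ Fintype.card V := le_trans (Finset.card_le_univ A)
        (le_of_eq Finset.card_univ)
      have hcards : Fintype.card ↥s = Fintype.card V - A.card := by
        have e1 : Fintype.card ↥((↑A : Set V)ᶜ) = Fintype.card V - Fintype.card ↥(↑A : Set V) :=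
          Fintype.card_compl_set _
        have e2 : Fintype.card ↥(↑A : Set V) = A.card := by
          rw [← Fintype.card_coe A]
          exact Fintype.card_congr (Equiv.subtypeEquivRight (by simp))
        calc Fintype.card ↥s = Fintype.card ↥((↑A : Set V)ᶜ) :=
              Fintype.card_congr (Equiv.subtypeEquivRight (by simp [hs]))
          _ = Fintype.card V - A.card := by rw [e1, e2]
      have hlt : Fintype.card ↥s < n := by
        rw [hcards]
        omega
      obtain ⟨S₁, hS₁card, hS₁comp⟩ := ih (Fintype.card ↥s) hlt ↥s (G.induce s) le_rfl
        (tw_induce hG s) (p - (t + 1)) (by linarith)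
      refine ⟨X ∪ S₁.image Subtype.val, ?_, ?_⟩
      · calc ((X ∪ S₁.image Subtype.val).card : ℝ)
            ≤ (X.card : ℝ) + (S₁.image Subtype.val).card := by
              exact_mod_cast Finset.card_union_le _ _
          _ ≤ (t + 1) + (p - (t + 1)) := by
              refine add_le_add ?_ (le_trans ?_ hS₁card)
              · exact_mod_cast hXcard
              · exact_mod_cast Finset.card_image_le
          _ = p := by ring
      · intro C hCS hCconn
        have hCX : ∀ v ∈ C, v ∉ X := fun v hv hvX =>
          hCS v hv (Finset.mem_union_left _ hvX)
        have hlinkC : Linked G (C : Set V) := (connected_iff_linked G _).mp hCconn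
        have hcases : (∀ v ∈ C, v ∈ A) ∨ (∀ v ∈ C, v ∉ A) := by
          by_contra h
          push_neg at h
          obtain ⟨⟨w, hwC, hwA⟩, ⟨u, huC, huA⟩⟩ := h
          obtain ⟨q, hq⟩ := hlinkC.2 u huC w hwC
          obtain ⟨a, b, hab, haA, hbA, haC, hbC⟩ :=
            walk_cross (A := A) (C := C) q (fun z hz => hq z hz) huA hwA
          exact hsep a b haA hbA (hCX b hbC) hab
        rcases hcases with hsub | hdis
        · exact hcomp C (fun v hv => ⟨hsub v hv, hCX v hv⟩) hCconn
        · -- C lives in the complement of A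
          set C' : Finset ↥s := C.subtype (· ∈ s) with hC'
          have hCs : ∀ v ∈ C, v ∈ s := fun v hv => by
            simp only [hs, Set.mem_compl_iff, Finset.coe_mem, Finset.mem_coe]
            exact hdis v hv
          have hC'card : C'.card = C.card := by
            rw [hC', Finset.card_subtype, Finset.filter_true_of_mem hCs]
          have hC'S₁ : ∀ w ∈ C', w ∉ S₁ := by
            intro w hw hwS₁
            have : (w : V) ∈ S₁.image Subtype.val := Finset.mem_image_of_mem _ hwS₁
            exact hCS w (by simpa [hC'] using hw) (Finset.mem_union_right _ this)
          have hwset : Subtype.val '' {x : ↥s | ↑x ∈ C} = (C : Set V) := by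
            ext v
            constructor
            · rintro ⟨⟨v', hv'⟩, hvC, rfl⟩; exact hvC
            · intro hv; exact ⟨⟨v, hCs v hv⟩, hv, rfl⟩
          have hlink' : Linked (G.induce s) {x : ↥s | ↑x ∈ C} := by
            rw [linked_induce_iff, hwset]; exact hlinkC
          have hC'set : (C' : Set ↥s) = {x : ↥s | ↑x ∈ C} := by
            ext w; simp [hC']
          have hC'conn : ((G.induce s).induce (C' : Set ↥s)).Connected := by
            rw [connected_iff_linked, hC'set]; exact hlink'
          have hbound := hS₁comp C' hC'S₁ hC'conn
          rw [hC'card] at hbound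
          refine le_trans hbound ?_
          rw [hcards]
          have hnap : ((t : ℝ) + 1) * (Fintype.card V) < A.card * p := by
            rw [hmdef, div_lt_iff₀ hp] at hAcard
            linarith
          have hcast : ((Fintype.card V - A.card : ℕ) : ℝ) =
              (Fintype.card V : ℝ) - A.card := by
            push_cast [Nat.cast_sub hAle]; ring
          rw [hcast, hmdef, div_le_div_iff₀ (by linarith) hp]
          nlinarith [hCV A, hp.le]

lemma walk_supp {V : Type*} {G : SimpleGraph V} :
    ∀ {u v : V} (p : G.Walk u v) (z : V), z ∈ p.support →
      G.connectedComponentMk z = G.connectedComponentMk u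
  | u, _, SimpleGraph.Walk.nil, z, hz => by
    rw [SimpleGraph.Walk.support_nil, List.mem_singleton] at hz
    rw [hz]
  | u, v, SimpleGraph.Walk.cons hadj q, z, hz => by
    rw [SimpleGraph.Walk.support_cons, List.mem_cons] at hz
    rcases hz with rfl | hz
    · rfl
    · rw [walk_supp q z hz]
      exact (SimpleGraph.ConnectedComponent.connectedComponentMk_eq_of_adj hadj).symm

lemma supp_linked {V : Type*} {G : SimpleGraph V} (κ : G.ConnectedComponent) :
    Linked G κ.supp := by
  obtain ⟨v, hv⟩ := κ.exists_rep
  refine ⟨⟨v, by rw [SimpleGraph.ConnectedComponent.mem_supp_iff]; exact hv⟩, ?_⟩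
  intro u hu w hw
  rw [SimpleGraph.ConnectedComponent.mem_supp_iff] at hu hw
  obtain ⟨p⟩ := SimpleGraph.ConnectedComponent.exact (hu.trans hw.symm)
  refine ⟨p, fun z hz => ?_⟩
  rw [SimpleGraph.ConnectedComponent.mem_supp_iff, walk_supp p z hz, hu]

lemma arith_key {a N : ℝ} (ha : 0 < a) (hN : 0 < N) (c : ℕ) :
    a ^ ((c : ℝ) / ((c : ℝ) + 1)) *
      (a * N / (a ^ (((c : ℝ) + 1) / ((c : ℝ) + 1 + 1)) * N ^ ((1 : ℝ) / ((c : ℝ) + 1 + 1)))) ^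
        ((1 : ℝ) / ((c : ℝ) + 1)) =
      a ^ (((c : ℝ) + 1) / ((c : ℝ) + 1 + 1)) * N ^ ((1 : ℝ) / ((c : ℝ) + 1 + 1)) := by
  have hc0 : (0 : ℝ) ≤ (c : ℝ) := Nat.cast_nonneg c
  have hc1 : ((c : ℝ) + 1) ≠ 0 := by positivity
  have hc2 : ((c : ℝ) + 1 + 1) ≠ 0 := by positivity
  set α : ℝ := ((c : ℝ) + 1) / ((c : ℝ) + 1 + 1) with hα
  set β : ℝ := (1 : ℝ) / ((c : ℝ) + 1 + 1) with hβ
  have h1 : a * N / (a ^ α * N ^ β) = a ^ (1 - α) * N ^ (1 - β) := by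
    rw [Real.rpow_sub ha, Real.rpow_sub hN, Real.rpow_one, Real.rpow_one,
      div_mul_div_comm]
  rw [h1, Real.mul_rpow (Real.rpow_nonneg ha.le _) (Real.rpow_nonneg hN.le _),
    ← Real.rpow_mul ha.le, ← Real.rpow_mul hN.le, ← mul_assoc, ← Real.rpow_add ha]
  have e1 : (c : ℝ) / ((c : ℝ) + 1) + (1 - α) * ((1 : ℝ) / ((c : ℝ) + 1)) = α := by
    rw [hα]; field_simp; ring
  have e2 : (1 - β) * ((1 : ℝ) / ((c : ℝ) + 1)) = β := by
    rw [hβ]; field_simp; ring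
  rw [e1, e2]

lemma main_colouring {t : ℕ} (c : ℕ) : ∀ (V : Type) [Fintype V], ∀ (G : SimpleGraph V),
    TreewidthLE G t → ∀ N : ℝ, (Fintype.card V : ℝ) ≤ N →
    ∃ f : V → Fin (c + 1), ClusterLEReal G f
      (((t : ℝ) + 1) ^ ((c : ℝ) / ((c : ℝ) + 1)) * N ^ ((1 : ℝ) / ((c : ℝ) + 1))) := by
  induction c with
  | zero =>
    intro V _ G hG N hN
    refine ⟨fun _ => 0, fun S hm hc => ?_⟩
    have h1 : (S.card : ℝ) ≤ N := by
      refine le_trans ?_ hN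
      exact_mod_cast le_trans (Finset.card_le_univ S) (le_of_eq Finset.card_univ)
    refine h1.trans (le_of_eq ?_)
    norm_num
  | succ c ihc =>
    intro V _ G hG N hN
    classical
    cases isEmpty_or_nonempty V with
    | inl hemp =>
      exact ⟨fun _ => 0, fun S hm hcn => hcn.nonempty.elim fun x => hemp.elim x.val⟩
    | inr hne =>
      have hcard1 : (1 : ℝ) ≤ (Fintype.card V : ℝ) := by exact_mod_cast Fintype.card_pos
      have hN1 : (1 : ℝ) ≤ N := le_trans hcard1 hN
      have hN0 : (0 : ℝ) < N := by linarith
      have ha : (0 : ℝ) < (t : ℝ) + 1 := by positivity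
      set p : ℝ := ((t : ℝ) + 1) ^ (((c : ℝ) + 1) / ((c : ℝ) + 1 + 1)) *
        N ^ ((1 : ℝ) / ((c : ℝ) + 1 + 1)) with hpdef
      have hppos : 0 < p := by positivity
      obtain ⟨S, hScard, hScomp⟩ := sep (Fintype.card V) V G le_rfl hG p hppos
      set s : Set V := {v : V | v ∉ S} with hsdef
      set N' : ℝ := ((t : ℝ) + 1) * N / p with hN'def
      have hsepN' : ∀ C : Finset V, (∀ v ∈ C, v ∉ S) → (G.induce (C : Set V)).Connected →
          (C.card : ℝ) ≤ N' := by
        intro C h1 h2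
        refine le_trans (hScomp C h1 h2) ?_
        rw [hN'def]
        gcongr
      have hsuppcard : ∀ κ : (G.induce s).ConnectedComponent,
          (Fintype.card ↥κ.supp : ℝ) ≤ N' := by
        intro κ
        set Cfin : Finset V := Finset.univ.image (fun x : ↥κ.supp => ((x : ↥s) : V)) with hCfin
        have hinj : Function.Injective (fun x : ↥κ.supp => ((x : ↥s) : V)) :=
          fun x y h => Subtype.ext (Subtype.ext h)
        have hCfincard : Cfin.card = Fintype.card ↥κ.supp := by
          rw [hCfin, Finset.card_image_of_injective _ hinj, Finset.card_univ]
        have hCfinset : (Cfin : Set V) = Subtype.val '' κ.supp := by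
          ext v
          simp only [hCfin, Finset.coe_image, Finset.coe_univ, Set.image_univ, Set.mem_range,
            Set.mem_image]
          constructor
          · rintro ⟨x, rfl⟩; exact ⟨x, x.2, rfl⟩
          · rintro ⟨y, hy, rfl⟩; exact ⟨⟨y, hy⟩, rfl⟩
        have hlink : Linked G (Cfin : Set V) := by
          rw [hCfinset, ← linked_induce_iff]
          exact supp_linked κ
        have havoid : ∀ v ∈ Cfin, v ∉ S := by
          intro v hv
          obtain ⟨x, -, rfl⟩ := Finset.mem_image.mp (hCfin ▸ hv)
          exact (x : ↥s).2
        have hb := hsepN' Cfin havoid ((connected_iff_linked G _).mpr hlink)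
        rwa [hCfincard] at hb
      have hcompcol : ∀ κ : (G.induce s).ConnectedComponent,
          ∃ f : ↥κ.supp → Fin (c + 1), ClusterLEReal ((G.induce s).induce κ.supp) f
            (((t : ℝ) + 1) ^ ((c : ℝ) / ((c : ℝ) + 1)) * N' ^ ((1 : ℝ) / ((c : ℝ) + 1))) :=
        fun κ => ihc ↥κ.supp ((G.induce s).induce κ.supp)
          (tw_induce (tw_induce hG s) κ.supp) N' (hsuppcard κ)
      choose F hF using hcompcol
      have hFcongr : ∀ (κ κ' : (G.induce s).ConnectedComponent) (h : κ = κ')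
          (x : ↥κ.supp) (y : ↥κ'.supp), ((x : ↥s) : V) = ((y : ↥s) : V) → F κ x = F κ' y := by
        rintro κ _ rfl x y hxy
        congr 1
        exact Subtype.ext (Subtype.ext hxy)
      set f : V → Fin (c + 1 + 1) := fun v =>
        if h : v ∈ S then Fin.last (c + 1)
        else (F ((G.induce s).connectedComponentMk ⟨v, h⟩) ⟨⟨v, h⟩, rfl⟩).castSucc with hfdef
      refine ⟨f, ?_⟩
      intro S' hmono hconn
      have hpe : p = ((t : ℝ) + 1) ^ (((c + 1 : ℕ) : ℝ) / (((c + 1 : ℕ) : ℝ) + 1)) *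
          N ^ ((1 : ℝ) / (((c + 1 : ℕ) : ℝ) + 1)) := by
        rw [hpdef]; push_cast; ring_nf
      obtain ⟨⟨v₀, hv₀⟩⟩ := hconn.nonempty
      have hv₀S' : v₀ ∈ S' := hv₀
      have hfS : ∀ v (h : v ∈ S), f v = Fin.last (c + 1) := by
        intro v h; simp only [hfdef, dif_pos h]
      have hfnS : ∀ v (h : v ∉ S), f v =
          (F ((G.induce s).connectedComponentMk ⟨v, h⟩) ⟨⟨v, h⟩, rfl⟩).castSucc := by
        intro v h; simp only [hfdef, dif_neg h]
      by_cases hv₀S : v₀ ∈ S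
      · have hsub : ∀ v ∈ S', v ∈ S := by
          intro v hv
          by_contra hvS
          have h1 : f v = f v₀ := hmono v hv v₀ hv₀S'
          rw [hfS v₀ hv₀S, hfnS v hvS] at h1
          exact absurd h1 (Fin.castSucc_lt_last _).ne
        have h2 : (S'.card : ℝ) ≤ p :=
          le_trans (by exact_mod_cast Finset.card_le_card fun v hv => hsub v hv) hScard
        exact h2.trans_eq hpe
      · have hS'avoid : ∀ v ∈ S', v ∉ S := by
          intro v hv hvS
          have h1 : f v = f v₀ := hmono v hv v₀ hv₀S'
          rw [hfS v hvS, hfnS v₀ hv₀S] at h1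
          exact absurd h1.symm (Fin.castSucc_lt_last _).ne
        have hv₀s : v₀ ∈ s := hv₀S
        set κ₀ := (G.induce s).connectedComponentMk ⟨v₀, hv₀s⟩ with hκ₀
        have hlinkS' : Linked G (S' : Set V) := (connected_iff_linked G _).mp hconn
        have hcompeq : ∀ (v : V) (hv : v ∈ S'),
            (G.induce s).connectedComponentMk ⟨v, hS'avoid v hv⟩ = κ₀ := by
          intro v hv
          obtain ⟨q, hq⟩ := hlinkS'.2 v₀ hv₀ v hv
          obtain ⟨hu', hv', q', -⟩ := lift_walk (s := s) {x : ↥s | (x : V) ∈ S'} q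
            (fun z hz => ⟨⟨z, hS'avoid z (hq z hz)⟩, hq z hz, rfl⟩)
          rw [hκ₀]
          exact walk_supp q' _ q'.end_mem_support
        set S'' : Finset ↥κ₀.supp :=
          Finset.univ.filter (fun x : ↥κ₀.supp => ((x : ↥s) : V) ∈ S') with hS''
        have hmem'' : ∀ x : ↥κ₀.supp, x ∈ S'' ↔ ((x : ↥s) : V) ∈ S' := by
          intro x; simp [hS'']
        have hcard'' : S''.card = S'.card := by
          apply Finset.card_bij (fun (x : ↥κ₀.supp) (_ : x ∈ S'') => ((x : ↥s) : V))
          · intro a ha; exact (hmem'' a).mp ha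
          · intro a _ b _ h; exact Subtype.ext (Subtype.ext h)
          · intro b hb
            refine ⟨⟨⟨b, hS'avoid b hb⟩, ?_⟩, ?_, rfl⟩
            · rw [SimpleGraph.ConnectedComponent.mem_supp_iff]; exact hcompeq b hb
            · exact (hmem'' _).mpr hb
        have hFval : ∀ (x : ↥κ₀.supp), f ((x : ↥s) : V) = (F κ₀ x).castSucc := by
          intro x
          have hxS : ((x : ↥s) : V) ∉ S := (x : ↥s).2
          rw [hfnS _ hxS]
          have hmk : (G.induce s).connectedComponentMk ⟨((x : ↥s) : V), hxS⟩ = κ₀ := by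
            have h2 := x.2
            rw [SimpleGraph.ConnectedComponent.mem_supp_iff] at h2
            exact h2
          exact congrArg Fin.castSucc (hFcongr _ _ hmk _ x rfl)
        have hmono'' : IsMonochromatic (F κ₀) S'' := by
          intro u hu v hv
          have h1 := hmono _ ((hmem'' u).mp hu) _ ((hmem'' v).mp hv)
          rw [hFval u, hFval v] at h1
          exact Fin.castSucc_injective _ h1
        have hS''conn : (((G.induce s).induce κ₀.supp).induce (S'' : Set ↥κ₀.supp)).Connected := by
          rw [connected_iff_linked, linked_induce_iff]
          have h1 : (Subtype.val '' (S'' : Set ↥κ₀.supp)) = {x : ↥s | (x : V) ∈ S'} := by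
            ext x
            constructor
            · rintro ⟨y, hy, rfl⟩; exact (hmem'' y).mp hy
            · intro hx
              refine ⟨⟨x, ?_⟩, ?_, rfl⟩
              · rw [SimpleGraph.ConnectedComponent.mem_supp_iff]; exact hcompeq x hx
              · exact (hmem'' _).mpr hx
          rw [h1, linked_induce_iff]
          have h2 : Subtype.val '' {x : ↥s | (x : V) ∈ S'} = (S' : Set V) := by
            ext v
            constructor
            · rintro ⟨y, hy, rfl⟩; exact hy
            · intro hv; exact ⟨⟨v, hS'avoid v hv⟩, hv, rfl⟩
          rw [h2]
          exact hlinkS'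
        have hfin := hF κ₀ S'' hmono'' hS''conn
        rw [hcard''] at hfin
        have harr : ((t : ℝ) + 1) ^ ((c : ℝ) / ((c : ℝ) + 1)) * N' ^ ((1 : ℝ) / ((c : ℝ) + 1))
            = p := by
          rw [hN'def, hpdef]
          exact arith_key ha hN0 c
        exact (hfin.trans_eq harr).trans_eq hpe
/-- Every graph of treewidth at most `t` has a `c`-colouring with every monochromatic
component of size at most `(t+1)^{(c-1)/c} · n^{1/c}`. -/
theorem tw_colouring (c t : ℕ) (hc : 0 < c) (ht : 0 < t) {V : Type} [Fintype V]
    (G : SimpleGraph V) (hG : TreewidthLE G t) :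
    ∃ f : V → Fin c, ClusterLEReal G f
      (((t : ℝ) + 1) ^ (((c : ℝ) - 1) / (c : ℝ)) *
        (Fintype.card V : ℝ) ^ ((1 : ℝ) / (c : ℝ))) := by
  obtain ⟨c', rfl⟩ : ∃ c', c = c' + 1 := ⟨c - 1, by omega⟩
  obtain ⟨f, hf⟩ := main_colouring (t := t) c' V G hG (Fintype.card V) le_rfl
  refine ⟨f, fun S hm hc2 => (hf S hm hc2).trans_eq ?_⟩
  push_cast
  ring_nf
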